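/- For every k ≥ 0, if H^k − H* > 2 min{L₁/β₁, L₂/β₂} R², then H^k − H* ≤ (1/2)^k (H⁰ − H*). Consequently, the minimal index m ≥ 0 such that H^m − H* ≤ 2 min{L₁/β₁, L₂/β₂} R² exists and satisfies m ≤ m* := max{0, −1 + ⌈log₂( (H⁰ − H*) / (min{L₁/β₁, L₂/β₂} R²) )⌉}. -/

import Mathlib

open Set

/-- The composite objective function `H(x₁,x₂) = f(x₁,x₂) + g₁(x₁) + g₂(x₂)`. -/
noncomputable def objFun {B₁ B₂ : Type*} (f : B₁ × B₂ → ℝ) (g₁ : B₁ → ℝ) (g₂ : B₂ → ℝ)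
    (x : B₁ × B₂) : ℝ :=
  f x + g₁ x.1 + g₂ x.2

private lemma aux_le_of_small (a b C : ℝ) (hC : 0 ≤ C)
    (h : ∀ t : ℝ, 0 < t → t ≤ 1 → a ≤ b + C * t) : a ≤ b := by
  by_contra hab
  push_neg at hab
  have hC1 : 0 < C + 1 := by linarith
  set t := min 1 ((a - b) / (C + 1)) with ht
  have ht0 : 0 < t := lt_min one_pos (div_pos (by linarith) hC1)
  have h2 := h t ht0 (min_le_left _ _)
  have h3 : t ≤ (a - b) / (C + 1) := min_le_right _ _
  have h4 : C * t ≤ C * ((a - b) / (C + 1)) := mul_le_mul_of_nonneg_left h3 hC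
  have h5 : C * ((a - b) / (C + 1)) < a - b := by
    rw [mul_div_assoc'] at *
    rw [div_lt_iff₀ hC1]
    nlinarith
  linarith

private lemma grad_ineq {E : Type*} [NormedAddCommGroup E] [NormedSpace ℝ E]
    {S : Set E} (hS : Convex ℝ S) {f : E → ℝ} {Df : E → E →L[ℝ] ℝ}
    (hfconv : ConvexOn ℝ S f) (hfdiff : ∀ x ∈ S, HasFDerivWithinAt f (Df x) S x)
    {w z : E} (hw : w ∈ S) (hz : z ∈ S) : Df w (z - w) ≤ f z - f w := by
  set γ : ℝ → E := fun t => w + t • (z - w) with hγdef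
  have hcomb : ∀ t : ℝ, (1 - t) • w + t • z = γ t := by
    intro t; simp only [hγdef]; module
  have hmem : Set.MapsTo γ (Set.Icc (0:ℝ) 1) S := by
    intro t ht
    rw [← hcomb]
    exact hS hw hz (by linarith [ht.2]) ht.1 (by ring)
  have hγ0 : γ 0 = w := by simp [hγdef]
  have hγd : HasDerivWithinAt γ (z - w) (Set.Icc 0 1) 0 := by
    have : HasDerivAt γ ((1:ℝ) • (z - w)) 0 :=
      ((hasDerivAt_id (0:ℝ)).smul_const (z - w)).const_add w
    simpa using this.hasDerivWithinAt
  have hD : HasDerivWithinAt (f ∘ γ) (Df w (z - w)) (Set.Icc 0 1) 0 :=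
    (hfdiff w hw).comp_hasDerivWithinAt_of_eq (0:ℝ) hγd hmem hγ0.symm
  have htend := hasDerivWithinAt_iff_tendsto_slope.mp hD
  rw [Set.Icc_diff_left] at htend
  have hne : (nhdsWithin (0:ℝ) (Set.Ioc (0:ℝ) 1)).NeBot := by
    refine mem_closure_iff_nhdsWithin_neBot.mp ?_
    rw [closure_Ioc (one_ne_zero : (1:ℝ) ≠ 0).symm]
    exact ⟨le_refl 0, by norm_num⟩
  refine le_of_tendsto htend ?_
  filter_upwards [self_mem_nhdsWithin] with t ht
  have ht0 : 0 < t := ht.1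
  have hcb : f (γ t) ≤ (1 - t) * f w + t * f z := by
    rw [← hcomb]
    exact hfconv.2 hw hz (by linarith [ht.2]) ht0.le (by ring)
  have hsl : slope (f ∘ γ) 0 t = (f (γ t) - f w) / t := by
    simp [slope, hγ0, Function.comp]
    ring
  rw [hsl, div_le_iff₀ ht0]
  nlinarith

/-- initial linear decrease phase in the plain convex case:
for every `k ≥ 0`, if `H^k - H* > 2 min{L₁/β₁, L₂/β₂} R²` then
`H^k - H* ≤ (1/2)^k (H⁰ - H*)`; consequently the minimal index `m` with
`H^m - H* ≤ 2 min{L₁/β₁, L₂/β₂} R²` exists and satisfies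
`m ≤ m* = max{0, -1 + ⌈log₂((H⁰ - H*)/(min{L₁/β₁, L₂/β₂} R²))⌉}`. -/
theorem stmt13
    {B₁ B₂ : Type*}
    [NormedAddCommGroup B₁] [NormedSpace ℝ B₁] [CompleteSpace B₁]
    [NormedAddCommGroup B₂] [NormedSpace ℝ B₂] [CompleteSpace B₂]
    (f : B₁ × B₂ → ℝ) (Df : B₁ × B₂ → (B₁ × B₂) →L[ℝ] ℝ)
    (g₁ : B₁ → ℝ) (g₂ : B₂ → ℝ) (S₁ : Set B₁) (S₂ : Set B₂)
    -- (P3): g₁, g₂ proper convex, subdifferentiable on their domains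
    (hS₁c : Convex ℝ S₁) (hS₂c : Convex ℝ S₂)
    (hS₁ne : S₁.Nonempty) (hS₂ne : S₂.Nonempty)
    (hg₁conv : ConvexOn ℝ S₁ g₁) (hg₂conv : ConvexOn ℝ S₂ g₂)
    (hg₁sub : ∀ x₁ ∈ S₁, ∃ d : B₁ →L[ℝ] ℝ, ∀ y₁ ∈ S₁, g₁ x₁ + d (y₁ - x₁) ≤ g₁ y₁)
    (hg₂sub : ∀ x₂ ∈ S₂, ∃ d : B₂ →L[ℝ] ℝ, ∀ y₂ ∈ S₂, g₂ x₂ + d (y₂ - x₂) ≤ g₂ y₂)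
    -- (P4): f convex and Fréchet differentiable on dom g₁ × dom g₂, with derivative Df
    (hfconv : ConvexOn ℝ (S₁ ×ˢ S₂) f)
    (hfdiff : ∀ x ∈ S₁ ×ˢ S₂, HasFDerivWithinAt f (Df x) (S₁ ×ˢ S₂) x)
    -- (P2): a norm `N` on the product space and the constants β₁, β₂
    (N : B₁ × B₂ → ℝ) (β₁ β₂ : ℝ) (hβ₁ : 0 < β₁) (hβ₂ : 0 < β₂)
    (hNnonneg : ∀ z : B₁ × B₂, 0 ≤ N z)
    (hN₁ : ∀ z : B₁ × B₂, β₁ * ‖z.1‖ ^ 2 ≤ N z ^ 2)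
    (hN₂ : ∀ z : B₁ × B₂, β₂ * ‖z.2‖ ^ 2 ≤ N z ^ 2)
    -- (P5): block Lipschitz continuity of the partial derivatives, with finite
    -- constants L₁, L₂ > 0, together with the (equivalent) block descent inequalities
    (L₁ L₂ : ℝ) (hL₁pos : 0 < L₁) (hL₂pos : 0 < L₂)
    (hlip₁ : ∀ x₁ ∈ S₁, ∀ x₂ ∈ S₂, ∀ h₁ : B₁, x₁ + h₁ ∈ S₁ →
      ‖(Df (x₁ + h₁, x₂)).comp (ContinuousLinearMap.inl ℝ B₁ B₂) -
        (Df (x₁, x₂)).comp (ContinuousLinearMap.inl ℝ B₁ B₂)‖ ≤ L₁ * ‖h₁‖)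
    (hlip₂ : ∀ x₁ ∈ S₁, ∀ x₂ ∈ S₂, ∀ h₂ : B₂, x₂ + h₂ ∈ S₂ →
      ‖(Df (x₁, x₂ + h₂)).comp (ContinuousLinearMap.inr ℝ B₁ B₂) -
        (Df (x₁, x₂)).comp (ContinuousLinearMap.inr ℝ B₁ B₂)‖ ≤ L₂ * ‖h₂‖)
    (hdesc₁ : ∀ x₁ ∈ S₁, ∀ x₂ ∈ S₂, ∀ h₁ : B₁, x₁ + h₁ ∈ S₁ →
      f (x₁ + h₁, x₂) ≤ f (x₁, x₂) + Df (x₁, x₂) (h₁, 0) + L₁ / 2 * ‖h₁‖ ^ 2)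
    (hdesc₂ : ∀ x₁ ∈ S₁, ∀ x₂ ∈ S₂, ∀ h₂ : B₂, x₂ + h₂ ∈ S₂ →
      f (x₁, x₂ + h₂) ≤ f (x₁, x₂) + Df (x₁, x₂) (0, h₂) + L₂ / 2 * ‖h₂‖ ^ 2)
    -- (P6): nonempty optimal set X with optimal value H*
    (X : Set (B₁ × B₂))
    (hX : X = {y ∈ S₁ ×ˢ S₂ | ∀ z ∈ S₁ ×ˢ S₂, objFun f g₁ g₂ y ≤ objFun f g₁ g₂ z})
    (hXne : X.Nonempty)
    (Hstar : ℝ) (hHstar : ∀ y ∈ X, objFun f g₁ g₂ y = Hstar)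
    -- projections onto X with respect to N
    (proj : B₁ × B₂ → B₁ × B₂)
    (hproj : ∀ z ∈ S₁ ×ˢ S₂, proj z ∈ X ∧ ∀ y ∈ X, N (z - proj z) ≤ N (z - y))
    -- (P8c): g₁, g₂ closed (lower semicontinuous), compact level set, diameter R
    (hg₁lsc : LowerSemicontinuousOn g₁ S₁) (hg₂lsc : LowerSemicontinuousOn g₂ S₂)
    (hS₁cl : IsClosed S₁) (hS₂cl : IsClosed S₂)
    -- the alternating minimization sequence
    (x : ℕ → B₁ × B₂)
    (hx0 : x 0 ∈ S₁ ×ˢ S₂)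
    (hinit : ∀ y₂ ∈ S₂, objFun f g₁ g₂ (x 0) ≤ objFun f g₁ g₂ ((x 0).1, y₂))
    (hstep1 : ∀ k : ℕ, (x (k + 1)).1 ∈ S₁ ∧ ∀ y₁ ∈ S₁,
      objFun f g₁ g₂ ((x (k + 1)).1, (x k).2) ≤ objFun f g₁ g₂ (y₁, (x k).2))
    (hstep2 : ∀ k : ℕ, (x (k + 1)).2 ∈ S₂ ∧ ∀ y₂ ∈ S₂,
      objFun f g₁ g₂ (x (k + 1)) ≤ objFun f g₁ g₂ ((x (k + 1)).1, y₂))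
    -- compactness of the level set of H at x⁰ and its diameter R relative to X
    (hcomp : IsCompact {z ∈ S₁ ×ˢ S₂ | objFun f g₁ g₂ z ≤ objFun f g₁ g₂ (x 0)})
    (R : ℝ) (hRpos : 0 < R)
    (hR : ∀ z ∈ S₁ ×ˢ S₂, objFun f g₁ g₂ z ≤ objFun f g₁ g₂ (x 0) →
      ∀ y ∈ X, N (z - y) ≤ R)
    (hH0 : Hstar < objFun f g₁ g₂ (x 0))
    -- the index shift m* and the constant p*
    (mstar : ℤ)
    (hmstar : mstar = max 0 (-1 +
      ⌈Real.logb 2 ((objFun f g₁ g₂ (x 0) - Hstar) / (min (L₁ / β₁) (L₂ / β₂) * R ^ 2))⌉))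
    :
    (∀ k : ℕ,
      2 * min (L₁ / β₁) (L₂ / β₂) * R ^ 2 < objFun f g₁ g₂ (x k) - Hstar →
        objFun f g₁ g₂ (x k) - Hstar ≤
          (1 / 2 : ℝ) ^ k * (objFun f g₁ g₂ (x 0) - Hstar)) ∧
    (∃ m : ℕ,
      (∀ j < m, 2 * min (L₁ / β₁) (L₂ / β₂) * R ^ 2 < objFun f g₁ g₂ (x j) - Hstar) ∧
      objFun f g₁ g₂ (x m) - Hstar ≤ 2 * min (L₁ / β₁) (L₂ / β₂) * R ^ 2 ∧
      (m : ℤ) ≤ mstar) := by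
  have hSconv : Convex ℝ (S₁ ×ˢ S₂) := hS₁c.prod hS₂c
  obtain ⟨xs, hxsX⟩ := hXne
  have hxs' : xs ∈ S₁ ×ˢ S₂ ∧ ∀ z ∈ S₁ ×ˢ S₂, objFun f g₁ g₂ xs ≤ objFun f g₁ g₂ z := by
    rw [hX] at hxsX; exact ⟨hxsX.1, hxsX.2⟩
  have hxsS : xs ∈ S₁ ×ˢ S₂ := hxs'.1
  have hxsX' : xs ∈ X := by rw [hX]; exact ⟨hxs'.1, hxs'.2⟩
  have hxsH : objFun f g₁ g₂ xs = Hstar := hHstar xs hxsX'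
  have memk : ∀ k, x k ∈ S₁ ×ˢ S₂ := by
    intro k
    cases k with
    | zero => exact hx0
    | succ n => exact Set.mem_prod.mpr ⟨(hstep1 n).1, (hstep2 n).1⟩
  have hdec : ∀ k, objFun f g₁ g₂ (x (k+1)) ≤ objFun f g₁ g₂ (x k) := by
    intro k
    calc objFun f g₁ g₂ (x (k+1)) ≤ objFun f g₁ g₂ ((x (k+1)).1, (x k).2) :=
          (hstep2 k).2 (x k).2 (memk k).2
      _ ≤ objFun f g₁ g₂ ((x k).1, (x k).2) := (hstep1 k).2 (x k).1 (memk k).1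
      _ = objFun f g₁ g₂ (x k) := rfl
  have hle0 : ∀ k, objFun f g₁ g₂ (x k) ≤ objFun f g₁ g₂ (x 0) := by
    intro k
    induction k with
    | zero => exact le_refl _
    | succ n ih => exact (hdec n).trans ih
  have hmin₂ : ∀ k, ∀ y₂ ∈ S₂, objFun f g₁ g₂ (x k) ≤ objFun f g₁ g₂ ((x k).1, y₂) := by
    intro k
    cases k with
    | zero => exact hinit
    | succ n => exact (hstep2 n).2
  -- first-order optimality in block 2 at x k
  have opt₂ : ∀ k, ∀ y₂ ∈ S₂, g₂ (x k).2 - g₂ y₂ ≤ Df (x k) (0, y₂ - (x k).2) := by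
    intro k y₂ hy₂
    set d := y₂ - (x k).2 with hd
    refine aux_le_of_small _ _ (L₂ * ‖d‖ ^ 2) (by positivity) ?_
    intro t ht0 ht1
    set p := (x k).2 + t • d with hp
    have hpe : (1 - t) • (x k).2 + t • y₂ = p := by
      simp only [hp, hd]; module
    have hpS : p ∈ S₂ := by
      rw [← hpe]; exact hS₂c (memk k).2 hy₂ (by linarith) ht0.le (by ring)
    have hwtS : ((x k).1, p) ∈ S₁ ×ˢ S₂ := Set.mem_prod.mpr ⟨(memk k).1, hpS⟩
    have hgp : g₂ p ≤ (1 - t) * g₂ (x k).2 + t * g₂ y₂ := by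
      rw [← hpe]; exact hg₂conv.2 (memk k).2 hy₂ (by linarith) ht0.le (by ring)
    have hf1 : f (x k) + t * (g₂ (x k).2 - g₂ y₂) ≤ f ((x k).1, p) := by
      have h := hmin₂ k p hpS
      simp only [objFun] at h
      nlinarith [hgp]
    have hgi := grad_ineq hSconv hfconv hfdiff hwtS (memk k)
    have hxw : x k - ((x k).1, p) = (-t) • ((0 : B₁), d) := by
      ext
      · simp
      · show (x k).2 - p = (-t) • d
        rw [hp]; module
    rw [hxw, map_smul, smul_eq_mul] at hgi
    have hlip := hlip₂ (x k).1 (memk k).1 (x k).2 (memk k).2 (t • d) (by rw [← hp]; exact hpS)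
    have hnorm : ‖t • d‖ = t * ‖d‖ := by
      rw [norm_smul, Real.norm_eq_abs, abs_of_pos ht0]
    have hAB : Df ((x k).1, (x k).2 + t • d) ((0:B₁), d) - Df ((x k).1, (x k).2) ((0:B₁), d) ≤
        L₂ * ‖d‖ ^ 2 * t := by
      have h1 := ((Df ((x k).1, (x k).2 + t • d)).comp (ContinuousLinearMap.inr ℝ B₁ B₂) -
          (Df ((x k).1, (x k).2)).comp (ContinuousLinearMap.inr ℝ B₁ B₂)).le_opNorm d
      have h2 := mul_le_mul_of_nonneg_right hlip (norm_nonneg d)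
      rw [hnorm] at h2
      have h3 : ‖Df ((x k).1, (x k).2 + t • d) ((0:B₁), d) -
          Df ((x k).1, (x k).2) ((0:B₁), d)‖ ≤ L₂ * (t * ‖d‖) * ‖d‖ := by
        simpa using h1.trans h2
      have h4 : Df ((x k).1, (x k).2 + t • d) ((0:B₁), d) -
          Df ((x k).1, (x k).2) ((0:B₁), d) ≤
          ‖Df ((x k).1, (x k).2 + t • d) ((0:B₁), d) -
          Df ((x k).1, (x k).2) ((0:B₁), d)‖ := by
        rw [Real.norm_eq_abs]; exact le_abs_self _
      have h5 : L₂ * (t * ‖d‖) * ‖d‖ = L₂ * ‖d‖ ^ 2 * t := by ring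
      linarith
    rw [← hp] at hAB
    have hE : ((x k).1, (x k).2) = x k := rfl
    rw [hE] at hAB
    have h5 : t * (g₂ (x k).2 - g₂ y₂) ≤ t * (Df ((x k).1, p) ((0:B₁), d)) := by linarith
    have h6 : g₂ (x k).2 - g₂ y₂ ≤ Df ((x k).1, p) ((0:B₁), d) :=
      (mul_le_mul_iff_right₀ ht0).mp h5
    linarith
  -- first-order optimality in block 1 at ((x (k+1)).1, (x k).2)
  have opt₁ : ∀ k, ∀ y₁ ∈ S₁, g₁ (x (k+1)).1 - g₁ y₁ ≤
      Df ((x (k+1)).1, (x k).2) (y₁ - (x (k+1)).1, 0) := by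
    intro k y₁ hy₁
    set d := y₁ - (x (k+1)).1 with hd
    refine aux_le_of_small _ _ (L₁ * ‖d‖ ^ 2) (by positivity) ?_
    intro t ht0 ht1
    set p := (x (k+1)).1 + t • d with hp
    have hpe : (1 - t) • (x (k+1)).1 + t • y₁ = p := by
      simp only [hp, hd]; module
    have hpS : p ∈ S₁ := by
      rw [← hpe]; exact hS₁c (hstep1 k).1 hy₁ (by linarith) ht0.le (by ring)
    have hwtS : (p, (x k).2) ∈ S₁ ×ˢ S₂ := Set.mem_prod.mpr ⟨hpS, (memk k).2⟩
    have huS : ((x (k+1)).1, (x k).2) ∈ S₁ ×ˢ S₂ :=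
      Set.mem_prod.mpr ⟨(hstep1 k).1, (memk k).2⟩
    have hgp : g₁ p ≤ (1 - t) * g₁ (x (k+1)).1 + t * g₁ y₁ := by
      rw [← hpe]; exact hg₁conv.2 (hstep1 k).1 hy₁ (by linarith) ht0.le (by ring)
    have hf1 : f ((x (k+1)).1, (x k).2) + t * (g₁ (x (k+1)).1 - g₁ y₁) ≤ f (p, (x k).2) := by
      have h := (hstep1 k).2 p hpS
      simp only [objFun] at h
      nlinarith [hgp]
    have hgi := grad_ineq hSconv hfconv hfdiff hwtS huS
    have hxw : ((x (k+1)).1, (x k).2) - (p, (x k).2) = (-t) • (d, (0 : B₂)) := by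
      ext
      · show (x (k+1)).1 - p = (-t) • d
        rw [hp]; module
      · simp
    rw [hxw, map_smul, smul_eq_mul] at hgi
    have hlip := hlip₁ (x (k+1)).1 (hstep1 k).1 (x k).2 (memk k).2 (t • d)
      (by rw [← hp]; exact hpS)
    have hnorm : ‖t • d‖ = t * ‖d‖ := by
      rw [norm_smul, Real.norm_eq_abs, abs_of_pos ht0]
    have hAB : Df ((x (k+1)).1 + t • d, (x k).2) (d, (0:B₂)) -
        Df ((x (k+1)).1, (x k).2) (d, (0:B₂)) ≤ L₁ * ‖d‖ ^ 2 * t := by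
      have h1 := ((Df ((x (k+1)).1 + t • d, (x k).2)).comp (ContinuousLinearMap.inl ℝ B₁ B₂) -
          (Df ((x (k+1)).1, (x k).2)).comp (ContinuousLinearMap.inl ℝ B₁ B₂)).le_opNorm d
      have h2 := mul_le_mul_of_nonneg_right hlip (norm_nonneg d)
      rw [hnorm] at h2
      have h3 : ‖Df ((x (k+1)).1 + t • d, (x k).2) (d, (0:B₂)) -
          Df ((x (k+1)).1, (x k).2) (d, (0:B₂))‖ ≤ L₁ * (t * ‖d‖) * ‖d‖ := by
        simpa using h1.trans h2
      have h4 : Df ((x (k+1)).1 + t • d, (x k).2) (d, (0:B₂)) -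
          Df ((x (k+1)).1, (x k).2) (d, (0:B₂)) ≤
          ‖Df ((x (k+1)).1 + t • d, (x k).2) (d, (0:B₂)) -
          Df ((x (k+1)).1, (x k).2) (d, (0:B₂))‖ := by
        rw [Real.norm_eq_abs]; exact le_abs_self _
      have h5 : L₁ * (t * ‖d‖) * ‖d‖ = L₁ * ‖d‖ ^ 2 * t := by ring
      linarith
    rw [← hp] at hAB
    have h5 : t * (g₁ (x (k+1)).1 - g₁ y₁) ≤ t * (Df (p, (x k).2) (d, (0:B₂))) := by linarith
    have h6 : g₁ (x (k+1)).1 - g₁ y₁ ≤ Df (p, (x k).2) (d, (0:B₂)) :=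
      (mul_le_mul_iff_right₀ ht0).mp h5
    linarith
  -- key decrease lemma
  have hkey : ∀ k, objFun f g₁ g₂ (x (k+1)) - Hstar ≤
      min (L₁ / β₁) (L₂ / β₂) * R ^ 2 / 2 := by
    intro k
    rcases le_total (L₁ / β₁) (L₂ / β₂) with hmn | hmn
    · -- block-1 argument
      rw [min_eq_left hmn]
      set d₁ := xs.1 - (x k).1 with hd₁
      have hx1d : (x k).1 + d₁ = xs.1 := by rw [hd₁]; module
      have hdesc := hdesc₁ (x k).1 (memk k).1 (x k).2 (memk k).2 d₁
        (by rw [hx1d]; exact hxsS.1)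
      rw [hx1d] at hdesc
      have step1 : objFun f g₁ g₂ (x (k+1)) ≤ objFun f g₁ g₂ (xs.1, (x k).2) :=
        ((hstep2 k).2 (x k).2 (memk k).2).trans ((hstep1 k).2 xs.1 hxsS.1)
      have hgi := grad_ineq hSconv hfconv hfdiff (memk k) hxsS
      have hsplit : (d₁, (0:B₂)) = (xs - x k) - ((0:B₁), xs.2 - (x k).2) := by
        ext
        · show d₁ = (xs.1 - (x k).1) - 0
          rw [hd₁]; module
        · show (0:B₂) = (xs.2 - (x k).2) - (xs.2 - (x k).2)
          module
      have hsplit' : Df (x k) (d₁, (0:B₂)) =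
          Df (x k) (xs - x k) - Df (x k) ((0:B₁), xs.2 - (x k).2) := by
        rw [hsplit, map_sub]
      have hopt := opt₂ k xs.2 hxsS.2
      have hRb := hR (x k) (memk k) (hle0 k) xs hxsX'
      have hNb := hN₁ (x k - xs)
      have hd1n : ‖(x k - xs).1‖ = ‖d₁‖ := by
        show ‖(x k).1 - xs.1‖ = ‖d₁‖
        rw [hd₁, norm_sub_rev]
      have hsq : β₁ * ‖d₁‖ ^ 2 ≤ R ^ 2 := by
        rw [← hd1n]
        exact hNb.trans (pow_le_pow_left₀ (hNnonneg _) hRb 2)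
      have hdb : ‖d₁‖ ^ 2 ≤ R ^ 2 / β₁ := by
        rw [le_div_iff₀ hβ₁]; linarith
      have hLd : L₁ / 2 * ‖d₁‖ ^ 2 ≤ L₁ / β₁ * R ^ 2 / 2 := by
        have := mul_le_mul_of_nonneg_left hdb (by positivity : (0:ℝ) ≤ L₁ / 2)
        calc L₁ / 2 * ‖d₁‖ ^ 2 ≤ L₁ / 2 * (R ^ 2 / β₁) := this
          _ = L₁ / β₁ * R ^ 2 / 2 := by ring
      have hHxs : f xs + g₁ xs.1 + g₂ xs.2 = Hstar := hxsH
      have hfin : objFun f g₁ g₂ (xs.1, (x k).2) ≤ Hstar + L₁ / 2 * ‖d₁‖ ^ 2 := by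
        show f (xs.1, (x k).2) + g₁ xs.1 + g₂ (x k).2 ≤ Hstar + L₁ / 2 * ‖d₁‖ ^ 2
        have hgi' : Df (x k) (xs - x k) ≤ f xs - f (x k) := hgi
        linarith [hdesc, hsplit', hopt, hgi']
      linarith [step1, hfin, hLd]
    · -- block-2 argument
      rw [min_eq_right hmn]
      set u : B₁ × B₂ := ((x (k+1)).1, (x k).2) with hu
      have huS : u ∈ S₁ ×ˢ S₂ := Set.mem_prod.mpr ⟨(hstep1 k).1, (memk k).2⟩
      have huH : objFun f g₁ g₂ u ≤ objFun f g₁ g₂ (x 0) :=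
        le_trans ((hstep1 k).2 (x k).1 (memk k).1) (hle0 k)
      set d₂ := xs.2 - (x k).2 with hd₂
      have hx2d : (x k).2 + d₂ = xs.2 := by rw [hd₂]; module
      have hdesc := hdesc₂ (x (k+1)).1 (hstep1 k).1 (x k).2 (memk k).2 d₂
        (by rw [hx2d]; exact hxsS.2)
      rw [hx2d] at hdesc
      have step1 : objFun f g₁ g₂ (x (k+1)) ≤ objFun f g₁ g₂ ((x (k+1)).1, xs.2) :=
        (hstep2 k).2 xs.2 hxsS.2
      have hgi := grad_ineq hSconv hfconv hfdiff huS hxsS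
      have hsplit : ((0:B₁), d₂) = (xs - u) - (xs.1 - (x (k+1)).1, (0:B₂)) := by
        ext
        · show (0:B₁) = (xs.1 - (x (k+1)).1) - (xs.1 - (x (k+1)).1)
          module
        · show d₂ = (xs.2 - (x k).2) - 0
          rw [hd₂]; module
      have hsplit' : Df u ((0:B₁), d₂) =
          Df u (xs - u) - Df u (xs.1 - (x (k+1)).1, (0:B₂)) := by
        rw [hsplit, map_sub]
      have hopt := opt₁ k xs.1 hxsS.1
      have hRb := hR u huS huH xs hxsX'
      have hNb := hN₂ (u - xs)
      have hd2n : ‖(u - xs).2‖ = ‖d₂‖ := by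
        show ‖(x k).2 - xs.2‖ = ‖d₂‖
        rw [hd₂, norm_sub_rev]
      have hsq : β₂ * ‖d₂‖ ^ 2 ≤ R ^ 2 := by
        rw [← hd2n]
        exact hNb.trans (pow_le_pow_left₀ (hNnonneg _) hRb 2)
      have hdb : ‖d₂‖ ^ 2 ≤ R ^ 2 / β₂ := by
        rw [le_div_iff₀ hβ₂]; linarith
      have hLd : L₂ / 2 * ‖d₂‖ ^ 2 ≤ L₂ / β₂ * R ^ 2 / 2 := by
        have := mul_le_mul_of_nonneg_left hdb (by positivity : (0:ℝ) ≤ L₂ / 2)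
        calc L₂ / 2 * ‖d₂‖ ^ 2 ≤ L₂ / 2 * (R ^ 2 / β₂) := this
          _ = L₂ / β₂ * R ^ 2 / 2 := by ring
      have hHxs : f xs + g₁ xs.1 + g₂ xs.2 = Hstar := hxsH
      have hfin : objFun f g₁ g₂ ((x (k+1)).1, xs.2) ≤ Hstar + L₂ / 2 * ‖d₂‖ ^ 2 := by
        show f ((x (k+1)).1, xs.2) + g₁ (x (k+1)).1 + g₂ xs.2 ≤ Hstar + L₂ / 2 * ‖d₂‖ ^ 2
        have hgi' : Df u (xs - u) ≤ f xs - f u := hgi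
        linarith [hdesc, hsplit', hopt, hgi']
      linarith [step1, hfin, hLd]
  have hcpos : 0 < min (L₁ / β₁) (L₂ / β₂) :=
    lt_min (div_pos hL₁pos hβ₁) (div_pos hL₂pos hβ₂)
  have hcR : 0 < min (L₁ / β₁) (L₂ / β₂) * R ^ 2 := by positivity
  constructor
  · intro k hk
    cases k with
    | zero => simp
    | succ n =>
      exfalso
      have := hkey n
      linarith
  · by_cases h0 : objFun f g₁ g₂ (x 0) - Hstar ≤ 2 * min (L₁ / β₁) (L₂ / β₂) * R ^ 2
    · refine ⟨0, ?_, h0, ?_⟩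
      · intro j hj; exact absurd hj (Nat.not_lt_zero j)
      · rw [hmstar]; exact_mod_cast le_max_left _ _
    · push_neg at h0
      refine ⟨1, ?_, ?_, ?_⟩
      · intro j hj
        interval_cases j
        exact h0
      · have := hkey 0; linarith
      · have h2 : (2:ℝ) < (objFun f g₁ g₂ (x 0) - Hstar) /
            (min (L₁ / β₁) (L₂ / β₂) * R ^ 2) := by
          rw [lt_div_iff₀ hcR]; linarith
        have hlog : (1:ℝ) < Real.logb 2 ((objFun f g₁ g₂ (x 0) - Hstar) /
            (min (L₁ / β₁) (L₂ / β₂) * R ^ 2)) := by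
          have hl := Real.logb_lt_logb (by norm_num : (1:ℝ) < 2) (by norm_num : (0:ℝ) < 2) h2
          rwa [Real.logb_self_eq_one (by norm_num)] at hl
        have hceil : (2:ℤ) ≤ ⌈Real.logb 2 ((objFun f g₁ g₂ (x 0) - Hstar) /
            (min (L₁ / β₁) (L₂ / β₂) * R ^ 2))⌉ := by
          have := Int.lt_ceil.mpr (show ((1:ℤ):ℝ) < _ by exact_mod_cast hlog)
          omega
        rw [hmstar]
        have : (1:ℤ) ≤ -1 + ⌈Real.logb 2 ((objFun f g₁ g₂ (x 0) - Hstar) /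
            (min (L₁ / β₁) (L₂ / β₂) * R ^ 2))⌉ := by omega
        exact_mod_cast this.trans (le_max_right _ _)
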